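/- Let H(n, q) denote the Hamming graph and let v_i, v_j be vertices of H(n, q). For every positive integer r, the number of walks of length r from v_i to v_j in H(n, q) equals Σ over all n-tuples (r_1, …, r_n) of nonnegative integers with r_1 + ⋯ + r_n = r of the multinomial coefficient r!/(r_1!⋯r_n!) times the product over t = 1, …, n of a_t(v_i, v_j), where a_t(v_i, v_j) = ((q − 1)/q)·((q − 1)^{r_t − 1} − (−1)^{r_t − 1}) if the t-th coordinates of v_i and v_j agree, and a_t(v_i, v_j) = (1/q)·((q − 1)^{r_t} − (−1)^{r_t}) if they differ. -/

import Mathlib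

/-- The number of walks of length `r` from `x` to `y` in the (di)graph on `V`
with adjacency relation `A`. -/
def walkCount {V : Type*} [Fintype V] [DecidableEq V] (A : V → V → Prop)
    [DecidableRel A] : ℕ → V → V → ℕ
  | 0, x, y => if x = y then 1 else 0
  | (r + 1), x, y => ∑ z : V, if A x z then walkCount A r z y else 0

/-- The adjacency relation of the Hamming graph `H(n, q)` on `n`-tuples with entries
in `Δ` (of size `q`): two tuples are adjacent iff they differ in exactly one entry. -/
def hammingAdj {n : ℕ} {Δ : Type*} (x y : Fin n → Δ) : Prop :=
  ∃ t, x t ≠ y t ∧ ∀ u, u ≠ t → x u = y u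

instance {n : ℕ} {Δ : Type*} [DecidableEq Δ] :
    DecidableRel (hammingAdj (n := n) (Δ := Δ)) := fun _ _ =>
  decidable_of_iff (∃ t, _ ∧ ∀ u, u ≠ t → _) Iff.rfl

/-- The closed formula for the number of walks of length `s` between two
(equal or distinct, according to `same`) vertices of the complete graph `K_q`:
`((q-1)/q)·((q-1)^{s-1} - (-1)^{s-1})` in the equal case (interpreted as `1`
when `s = 0`) and `(1/q)·((q-1)^s - (-1)^s)` in the distinct case. -/
def aFactor (q s : ℕ) (same : Prop) [Decidable same] : ℚ :=
  if same then
    if s = 0 then 1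
    else ((q : ℚ) - 1) / (q : ℚ) * (((q : ℚ) - 1) ^ (s - 1) - (-1 : ℚ) ^ (s - 1))
  else (1 / (q : ℚ)) * (((q : ℚ) - 1) ^ s - (-1 : ℚ) ^ s)

section Aux

open Finset

variable {n q : ℕ} {Δ : Type*} [Fintype Δ] [DecidableEq Δ]

/-- The adjacency matrix of the complete graph on `Δ`. -/
def kAdj (Δ : Type*) [DecidableEq Δ] : Matrix Δ Δ ℚ :=
  Matrix.of fun d e => if d = e then 0 else 1

lemma aFactor_prop (s : ℕ) (P : Prop) [Decidable P] :
    aFactor q s P = if P then aFactor q s True else aFactor q s False := by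
  by_cases h : P
  · rw [if_pos h]
    simp only [aFactor, if_pos h, if_pos trivial]
  · rw [if_neg h]
    simp only [aFactor, if_neg h, if_neg (fun c : False => c)]

lemma aFactor_succ_true (hq : (q : ℚ) ≠ 0) (s : ℕ) :
    aFactor q (s + 1) True = ((q : ℚ) - 1) * aFactor q s False := by
  simp only [aFactor, if_pos trivial, if_neg (Nat.succ_ne_zero s),
    if_neg (fun c : False => c), Nat.add_sub_cancel]
  field_simp

lemma aFactor_succ_false (hq : (q : ℚ) ≠ 0) (s : ℕ) :
    aFactor q (s + 1) False = aFactor q s True + ((q : ℚ) - 2) * aFactor q s False := by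
  cases s with
  | zero =>
    simp only [aFactor, if_neg (fun c : False => c), if_pos trivial, if_pos rfl]
    field_simp
    ring
  | succ s =>
    simp only [aFactor, if_neg (fun c : False => c), if_pos trivial,
      if_neg (Nat.succ_ne_zero s), Nat.add_sub_cancel]
    field_simp
    ring

lemma kAdj_pow_apply (hΔ : Fintype.card Δ = q) (s : ℕ) :
    ∀ d e : Δ, (kAdj Δ ^ s) d e = aFactor q s (d = e) := by
  induction s with
  | zero =>
    intro d e
    rw [pow_zero, Matrix.one_apply, aFactor_prop]
    by_cases h : d = e
    · simp [h, aFactor]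
    · simp [h, aFactor]
  | succ s ih =>
    intro d e
    have hne : Nonempty Δ := ⟨d⟩
    have hq1 : 0 < q := hΔ ▸ Fintype.card_pos
    have hq : (q : ℚ) ≠ 0 := by positivity
    rw [pow_succ, Matrix.mul_apply]
    have step : ∀ c : Δ, (kAdj Δ ^ s) d c * kAdj Δ c e
        = aFactor q s (d = c) - (if c = e then aFactor q s (d = c) else 0) := by
      intro c
      rw [ih d c]
      simp only [kAdj, Matrix.of_apply]
      split_ifs <;> ring
    rw [Finset.sum_congr rfl fun c _ => step c, Finset.sum_sub_distrib,
      Finset.sum_ite_eq' Finset.univ e (fun c => aFactor q s (d = c)),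
      if_pos (Finset.mem_univ e)]
    have split2 : ∀ c : Δ, aFactor q s (d = c)
        = aFactor q s False + (if d = c then aFactor q s True - aFactor q s False else 0) := by
      intro c
      rw [aFactor_prop]
      split_ifs <;> ring
    rw [Finset.sum_congr rfl fun c _ => split2 c, Finset.sum_add_distrib,
      Finset.sum_const, Finset.sum_ite_eq Finset.univ d
        (fun _ => aFactor q s True - aFactor q s False),
      if_pos (Finset.mem_univ d), Finset.card_univ, hΔ]
    rw [aFactor_prop s (d = e), aFactor_prop (s + 1) (d = e)]
    by_cases h : d = e
    · rw [if_pos h, if_pos h, aFactor_succ_true hq]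
      push_cast
      ring
    · rw [if_neg h, if_neg h, aFactor_succ_false hq]
      push_cast
      ring

/-- The matrix on `Fin n → Δ` acting as `B` on coordinate `t` and as the identity
elsewhere. -/
def lift (t : Fin n) (B : Matrix Δ Δ ℚ) : Matrix (Fin n → Δ) (Fin n → Δ) ℚ :=
  Matrix.of fun x y => if ∀ u, u ≠ t → x u = y u then B (x t) (y t) else 0

lemma liftSum_collapse (t : Fin n) (x : Fin n → Δ) (F : (Fin n → Δ) → ℚ)
    (hF : ∀ z : Fin n → Δ, ¬(∀ u, u ≠ t → x u = z u) → F z = 0) :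
    ∑ z, F z = ∑ d, F (Function.update x t d) := by
  have himg : ∀ z ∈ (Finset.univ : Finset (Fin n → Δ)),
      z ∉ Finset.image (Function.update x t) Finset.univ → F z = 0 := by
    intro z _ hz
    apply hF
    intro hcon
    apply hz
    refine Finset.mem_image.2 ⟨z t, Finset.mem_univ _, ?_⟩
    funext u
    by_cases hu : u = t
    · subst hu; simp
    · rw [Function.update_of_ne hu, hcon u hu]
  rw [← Finset.sum_subset (Finset.subset_univ _) himg,
    Finset.sum_image fun a _ b _ h => Function.update_injective x t h]

lemma update_cond (t : Fin n) (x : Fin n → Δ) (d : Δ) :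
    ∀ u, u ≠ t → x u = Function.update x t d u := by
  intro u hu
  rw [Function.update_of_ne hu]

lemma lift_one (t : Fin n) : lift (Δ := Δ) t 1 = 1 := by
  ext x y
  simp only [lift, Matrix.of_apply, Matrix.one_apply]
  by_cases hxy : x = y
  · subst hxy; simp
  · rw [if_neg hxy]
    by_cases h1 : ∀ u, u ≠ t → x u = y u
    · rw [if_pos h1, if_neg]
      intro h2
      apply hxy
      funext u
      by_cases hu : u = t
      · subst hu; exact h2
      · exact h1 u hu
    · rw [if_neg h1]

lemma lift_mul (t : Fin n) (B C : Matrix Δ Δ ℚ) :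
    lift t B * lift t C = lift (n := n) t (B * C) := by
  ext x y
  rw [Matrix.mul_apply,
    liftSum_collapse t x _ (fun z hz => by simp only [lift, Matrix.of_apply, if_neg hz, zero_mul])]
  simp only [lift, Matrix.of_apply, Function.update_self]
  have h2 : ∀ d : Δ, (∀ u, u ≠ t → Function.update x t d u = y u)
      ↔ (∀ u, u ≠ t → x u = y u) := by
    intro d
    constructor
    · intro h u hu; rw [← h u hu, Function.update_of_ne hu]
    · intro h u hu; rw [Function.update_of_ne hu]; exact h u hu
  by_cases hQ : ∀ u, u ≠ t → x u = y u
  · rw [if_pos hQ, Matrix.mul_apply]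
    refine Finset.sum_congr rfl fun d _ => ?_
    rw [if_pos (update_cond t x d), if_pos ((h2 d).2 hQ)]
  · rw [if_neg hQ]
    apply Finset.sum_eq_zero
    intro d _
    rw [if_neg (fun hc => hQ ((h2 d).1 hc)), mul_zero]

lemma lift_pow (t : Fin n) (B : Matrix Δ Δ ℚ) (s : ℕ) :
    lift (n := n) t B ^ s = lift t (B ^ s) := by
  induction s with
  | zero => rw [pow_zero, pow_zero, lift_one]
  | succ s ih => rw [pow_succ, pow_succ, ih, lift_mul]

lemma lift_mul_lift (t u : Fin n) (htu : t ≠ u) (B C : Matrix Δ Δ ℚ) :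
    lift t B * lift u C = Matrix.of fun x y =>
      if ∀ v, v ≠ t → v ≠ u → x v = y v then B (x t) (y t) * C (x u) (y u) else 0 := by
  ext x y
  rw [Matrix.mul_apply,
    liftSum_collapse t x _ (fun z hz => by simp only [lift, Matrix.of_apply, if_neg hz, zero_mul])]
  simp only [lift, Matrix.of_apply, Function.update_self]
  have hut : u ≠ t := htu.symm
  have hcond : ∀ d : Δ, (∀ v, v ≠ u → Function.update x t d v = y v)
      ↔ (d = y t ∧ ∀ v, v ≠ t → v ≠ u → x v = y v) := by
    intro d
    constructor
    · intro h
      refine ⟨by rw [← h t htu, Function.update_self], fun v hvt hvu => ?_⟩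
      rw [← h v hvu, Function.update_of_ne hvt]
    · rintro ⟨hd, hQ⟩ v hvu
      by_cases hvt : v = t
      · subst hvt; rw [Function.update_self, hd]
      · rw [Function.update_of_ne hvt]; exact hQ v hvt hvu
  by_cases hQ : ∀ v, v ≠ t → v ≠ u → x v = y v
  · rw [if_pos hQ]
    calc ∑ d : Δ,
        (if ∀ u_1, u_1 ≠ t → x u_1 = Function.update x t d u_1 then B (x t) d else 0) *
          (if ∀ v, v ≠ u → Function.update x t d v = y v
            then C (Function.update x t d u) (y u) else 0)
        = ∑ d : Δ, if d = y t then B (x t) d * C (x u) (y u) else 0 := by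
          refine Finset.sum_congr rfl fun d _ => ?_
          rw [if_pos (update_cond t x d), Function.update_of_ne hut]
          by_cases hd : d = y t
          · rw [if_pos ((hcond d).2 ⟨hd, hQ⟩), if_pos hd]
          · rw [if_neg (fun hc => hd ((hcond d).1 hc).1), if_neg hd, mul_zero]
      _ = B (x t) (y t) * C (x u) (y u) := by
          rw [Finset.sum_ite_eq' Finset.univ (y t)
            (fun d => B (x t) d * C (x u) (y u)), if_pos (Finset.mem_univ _)]
  · rw [if_neg hQ]
    apply Finset.sum_eq_zero
    intro d _
    rw [if_neg (fun hc => hQ ((hcond d).1 hc).2), mul_zero]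

lemma lift_comm (t u : Fin n) (htu : t ≠ u) (B C : Matrix Δ Δ ℚ) :
    Commute (lift (n := n) t B) (lift u C) := by
  show lift t B * lift u C = lift u C * lift t B
  rw [lift_mul_lift t u htu, lift_mul_lift u t htu.symm]
  ext x y
  simp only [Matrix.of_apply]
  have hiff : (∀ v, v ≠ t → v ≠ u → x v = y v) ↔ (∀ v, v ≠ u → v ≠ t → x v = y v) :=
    ⟨fun h v a b => h v b a, fun h v a b => h v b a⟩
  rw [if_congr hiff (mul_comm _ _) rfl]

lemma noncommProd_lift_apply (s : Finset (Fin n)) (B : Fin n → Matrix Δ Δ ℚ)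
    (h : (↑s : Set (Fin n)).Pairwise (Function.onFun Commute fun t => lift t (B t))) :
    ∀ x y : Fin n → Δ, s.noncommProd (fun t => lift t (B t)) h x y =
      if ∀ u, u ∉ s → x u = y u then ∏ t ∈ s, B t (x t) (y t) else 0 := by
  induction s using Finset.cons_induction with
  | empty =>
    intro x y
    rw [Finset.noncommProd_empty, Matrix.one_apply]
    by_cases hxy : x = y
    · subst hxy
      rw [if_pos rfl, if_pos (fun u _ => rfl), Finset.prod_empty]
    · rw [if_neg hxy, if_neg]
      intro hc
      exact hxy (funext fun u => hc u (Finset.notMem_empty u))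
  | cons a s ha ih =>
    intro x y
    rw [Finset.noncommProd_cons, Matrix.mul_apply,
      liftSum_collapse a x _ (fun z hz => by simp only [lift, Matrix.of_apply, if_neg hz, zero_mul])]
    have hupd : ∀ d : Δ, ∀ t ∈ s, Function.update x a d t = x t := by
      intro d t ht
      exact Function.update_of_ne (ne_of_mem_of_not_mem ht ha) _ _
    have hcond : ∀ d : Δ, (∀ u, u ∉ s → Function.update x a d u = y u)
        ↔ (d = y a ∧ ∀ u, u ∉ s → u ≠ a → x u = y u) := by
      intro d
      constructor
      · intro hcc
        refine ⟨by rw [← hcc a ha, Function.update_self], fun u hus hua => ?_⟩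
        rw [← hcc u hus, Function.update_of_ne hua]
      · rintro ⟨hd, hQ⟩ u hus
        by_cases hua : u = a
        · subst hua; rw [Function.update_self, hd]
        · rw [Function.update_of_ne hua]; exact hQ u hus hua
    have hmemc : ∀ u : Fin n, u ∉ Finset.cons a s ha ↔ (u ∉ s ∧ u ≠ a) := by
      intro u
      rw [Finset.mem_cons, not_or]
      tauto
    by_cases hQ : ∀ u, u ∉ s → u ≠ a → x u = y u
    · have hQ' : ∀ u, u ∉ Finset.cons a s ha → x u = y u := by
        intro u hu
        obtain ⟨h1, h2⟩ := (hmemc u).1 hu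
        exact hQ u h1 h2
      rw [if_pos hQ', Finset.prod_cons]
      calc ∑ d : Δ, lift a (B a) x (Function.update x a d) *
              Finset.noncommProd s (fun t => lift t (B t)) _ (Function.update x a d) y
          = ∑ d : Δ, if d = y a then B a (x a) (y a) * ∏ t ∈ s, B t (x t) (y t) else 0 := by
            refine Finset.sum_congr rfl fun d _ => ?_
            rw [ih _ (Function.update x a d) y, lift]
            simp only [Matrix.of_apply, Function.update_self]
            rw [if_pos (update_cond a x d)]
            by_cases hd : d = y a
            · rw [if_pos ((hcond d).2 ⟨hd, hQ⟩), if_pos hd, hd,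
                Finset.prod_congr rfl (fun t ht => by rw [hupd (y a) t ht])]
            · rw [if_neg (fun hc => hd ((hcond d).1 hc).1), if_neg hd, mul_zero]
        _ = B a (x a) (y a) * ∏ t ∈ s, B t (x t) (y t) := by
            rw [Finset.sum_ite_eq' Finset.univ (y a)
              (fun _ => B a (x a) (y a) * ∏ t ∈ s, B t (x t) (y t)),
              if_pos (Finset.mem_univ _)]
    · rw [if_neg]
      · apply Finset.sum_eq_zero
        intro d _
        rw [ih _ (Function.update x a d) y, if_neg (fun hc => hQ ((hcond d).1 hc).2), mul_zero]
      · intro hc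
        exact hQ fun u h1 h2 => hc u ((hmemc u).2 ⟨h1, h2⟩)

end Aux

/-- In the Hamming graph `H(n, q)`, the number of walks of length
`r ≥ 1` between two vertices equals the sum over all `(r₁, …, rₙ)` with
`r₁ + ⋯ + rₙ = r` of the multinomial coefficient `r!/(r₁!⋯rₙ!)` times the product
over `t` of `a_t`, where `a_t = ((q-1)/q)·((q-1)^{r_t-1} - (-1)^{r_t-1})` if the
`t`-th coordinates agree, and `a_t = (1/q)·((q-1)^{r_t} - (-1)^{r_t})` otherwise. -/
theorem stmt8 (n q : ℕ) (Δ : Type*) [Fintype Δ] [DecidableEq Δ]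
    (hΔ : Fintype.card Δ = q) (x y : Fin n → Δ) (r : ℕ) (hr : 0 < r) :
    (walkCount (hammingAdj (n := n) (Δ := Δ)) r x y : ℚ)
      = ∑ c ∈ Finset.Nat.antidiagonalTuple n r,
          (Nat.multinomial Finset.univ c : ℚ) *
            ∏ t, aFactor q (c t) (x t = y t) := by
  classical
  set M : Matrix (Fin n → Δ) (Fin n → Δ) ℚ := ∑ t, lift t (kAdj Δ) with hM
  have hMadj : ∀ x z : Fin n → Δ, M x z = if hammingAdj x z then 1 else 0 := by
    intro x z
    rw [hM, Matrix.sum_apply]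
    by_cases h : hammingAdj x z
    · rw [if_pos h]
      obtain ⟨t, ht1, ht2⟩ := h
      rw [Finset.sum_eq_single_of_mem t (Finset.mem_univ t)]
      · simp only [lift, kAdj, Matrix.of_apply]
        rw [if_pos ht2, if_neg ht1]
      · intro u _ hut
        simp only [lift, Matrix.of_apply]
        rw [if_neg]
        intro hcon
        exact ht1 (hcon t (Ne.symm hut))
    · rw [if_neg h]
      apply Finset.sum_eq_zero
      intro t _
      simp only [lift, kAdj, Matrix.of_apply]
      by_cases h1 : ∀ u, u ≠ t → x u = z u
      · rw [if_pos h1]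
        by_cases h2 : x t = z t
        · rw [if_pos h2]
        · exact absurd ⟨t, h2, h1⟩ h
      · rw [if_neg h1]
  have hwalk : ∀ r (x y : Fin n → Δ),
      (walkCount (hammingAdj (n := n) (Δ := Δ)) r x y : ℚ) = (M ^ r) x y := by
    intro r
    induction r with
    | zero =>
      intro x y
      rw [pow_zero, Matrix.one_apply]
      simp only [walkCount]
      split_ifs <;> simp
    | succ r ih =>
      intro x y
      rw [pow_succ', Matrix.mul_apply]
      simp only [walkCount]
      push_cast
      refine Finset.sum_congr rfl fun z _ => ?_
      rw [hMadj x z, ih z y]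
      by_cases h : hammingAdj x z <;> simp [h]
  have hcomm : (↑(Finset.univ : Finset (Fin n)) : Set (Fin n)).Pairwise
      (Function.onFun Commute fun t => lift (Δ := Δ) t (kAdj Δ)) :=
    fun t _ u _ htu => lift_comm t u htu _ _
  rw [hwalk r x y, hM, Finset.sum_pow_eq_sum_piAntidiag_of_commute _ _ hcomm r,
    Matrix.sum_apply]
  have hset : Finset.piAntidiag (Finset.univ : Finset (Fin n)) r
      = Finset.Nat.antidiagonalTuple n r := by
    ext k
    simp [Finset.mem_piAntidiag, Finset.Nat.mem_antidiagonalTuple]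
  rw [hset]
  refine Finset.sum_congr rfl fun k hk => ?_
  rw [← nsmul_eq_mul, Matrix.smul_apply, nsmul_eq_mul]
  congr 1
  have hcomm2 : (↑(Finset.univ : Finset (Fin n)) : Set (Fin n)).Pairwise
      (Function.onFun Commute fun t => lift (Δ := Δ) t (kAdj Δ) ^ k t) :=
    fun t _ u _ htu => Commute.pow_pow (lift_comm t u htu _ _) _ _
  rw [Finset.noncommProd_congr rfl (fun t _ => lift_pow t (kAdj Δ) (k t)) hcomm2]
  refine (noncommProd_lift_apply _ (fun t => kAdj Δ ^ k t) _ x y).trans ?_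
  rw [if_pos (fun u hu => absurd (Finset.mem_univ u) hu)]
  exact Finset.prod_congr rfl fun t _ => kAdj_pow_apply hΔ (k t) (x t) (y t)
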